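/- Derivation of the system of wave equations from the div–curl system. Let ψ_ν = ψ¹_ν + iψ²_ν : ℝ^{1+2} → ℂ (ν = 0,1,2) be Schwartz functions satisfying the div–curl system (i)–(ii). Then for each α ∈ {0,1,2}: □ψ_α = i[ −∂_t(ψ_α A₀) + ∂₁(ψ_α A₁) + ∂₂(ψ_α A₂) ] − i[ −∂_t(ψ₀ A_α) + ∂₁(ψ₁ A_α) + ∂₂(ψ₂ A_α) ] + i ∂_α( −ψ₀ A₀ + ψ₁ A₁ + ψ₂ A₂ ), where □ = −∂_t² + ∂₁² + ∂₂² and ∂₀ = ∂_t. -/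

import Mathlib

noncomputable section
open MeasureTheory
open scoped FourierTransform ENNReal RealInnerProductSpace

/-- The spatial plane `ℝ²`. -/
abbrev E2 := EuclideanSpace ℝ (Fin 2)
/-- Minkowski space `ℝ^{1+2}`, coordinates `(t, p)`. -/
abbrev ST2 := ℝ × E2
/-- Partial derivative `∂_ν` of a complex-valued function on `ℝ^{1+2}`. -/
def pdC (ν : Fin 3) (f : ST2 → ℂ) (z : ST2) : ℂ :=
  if ν.val = 0 then deriv (fun s => f (s, z.2)) z.1
  else deriv (fun s : ℝ =>
    f (z.1, z.2 + s • EuclideanSpace.single (if ν.val = 1 then (0 : Fin 2) else 1) (1 : ℝ))) (0 : ℝ)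
/-- The d'Alembertian of a complex-valued function on `ℝ^{1+2}`. -/
def boxC (f : ST2 → ℂ) (z : ST2) : ℂ :=
  -(pdC 0 (pdC 0 f) z) + pdC 1 (pdC 1 f) z + pdC 2 (pdC 2 f) z
/-- `A_α(t,p) = (1/2π) Σ_j ∫ ((p_j-q_j)/‖p-q‖²)(ψ¹_α ψ²_j - ψ²_α ψ¹_j)(t,q) dq`, where
`ψ¹_ν = Re ψ_ν` and `ψ²_ν = Im ψ_ν`. -/
def gaugeA (ψ : Fin 3 → ST2 → ℂ) (α : Fin 3) (z : ST2) : ℝ :=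
  (1 / (2 * Real.pi)) * ∑ j : Fin 2, ∫ q : E2,
    ((z.2 j - q j) / ‖z.2 - q‖ ^ 2) *
      ((ψ α (z.1, q)).re * (ψ j.succ (z.1, q)).im - (ψ α (z.1, q)).im * (ψ j.succ (z.1, q)).re)

/-- Equation (i) of the div–curl system:
`∂_α ψ_β - ∂_β ψ_α = i ψ_β A_α - i ψ_α A_β`. -/
def DivCurlI (ψ : Fin 3 → ST2 → ℂ) : Prop :=
  ∀ (α β : Fin 3) (z : ST2),
    pdC α (ψ β) z - pdC β (ψ α) z =
      Complex.I * ψ β z * (gaugeA ψ α z : ℂ) - Complex.I * ψ α z * (gaugeA ψ β z : ℂ)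

/-- Equation (ii) of the div–curl system:
`-∂_t ψ₀ + ∂₁ ψ₁ + ∂₂ ψ₂ = i(-ψ₀A₀ + ψ₁A₁ + ψ₂A₂)`. -/
def DivCurlII (ψ : Fin 3 → ST2 → ℂ) : Prop :=
  ∀ z : ST2, -(pdC 0 (ψ 0) z) + pdC 1 (ψ 1) z + pdC 2 (ψ 2) z =
    Complex.I * (-(ψ 0 z * (gaugeA ψ 0 z : ℂ)) + ψ 1 z * (gaugeA ψ 1 z : ℂ)
      + ψ 2 z * (gaugeA ψ 2 z : ℂ))

open Metric
open scoped ContDiff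

def dir3 : Fin 3 → ST2 :=
  ![(1, 0), (0, EuclideanSpace.single 0 1), (0, EuclideanSpace.single 1 1)]

lemma norm_dir3 (β : Fin 3) : ‖dir3 β‖ ≤ 1 := by
  fin_cases β <;>
    simp [dir3, Prod.norm_def, EuclideanSpace.norm_single]

lemma pdC_eq_line (β : Fin 3) (f : ST2 → ℂ) (z : ST2) :
    pdC β f z = deriv (fun s : ℝ => f (z + s • dir3 β)) 0 := by
  have h0 : pdC 0 f z = deriv (fun s : ℝ => f (z + s • dir3 0)) 0 := by
    show deriv (fun s => f (s, z.2)) z.1 = _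
    have he : (fun s : ℝ => f (z + s • dir3 0)) = fun s : ℝ => f (z.1 + s, z.2) := by
      funext s
      have : z + s • dir3 0 = (z.1 + s, z.2) := by
        simp [dir3, Prod.ext_iff]
      rw [this]
    rw [he]
    have := deriv_comp_const_add (fun u : ℝ => f (u, z.2)) z.1 0
    simpa using this.symm
  have h1 : pdC 1 f z = deriv (fun s : ℝ => f (z + s • dir3 1)) 0 := by
    show deriv _ _ = _
    have he : (fun s : ℝ => f (z + s • dir3 1))
        = fun s : ℝ => f (z.1, z.2 + s • EuclideanSpace.single (0 : Fin 2) (1:ℝ)) := by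
      funext s
      have : z + s • dir3 1 = (z.1, z.2 + s • EuclideanSpace.single (0 : Fin 2) (1:ℝ)) := by
        simp [dir3, Prod.ext_iff]
      rw [this]
    rw [he]; rfl
  have h2 : pdC 2 f z = deriv (fun s : ℝ => f (z + s • dir3 2)) 0 := by
    show deriv _ _ = _
    have he : (fun s : ℝ => f (z + s • dir3 2))
        = fun s : ℝ => f (z.1, z.2 + s • EuclideanSpace.single (1 : Fin 2) (1:ℝ)) := by
      funext s
      have : z + s • dir3 2 = (z.1, z.2 + s • EuclideanSpace.single (1 : Fin 2) (1:ℝ)) := by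
        simp [dir3, Prod.ext_iff]
      rw [this]
    rw [he]; rfl
  fin_cases β
  · exact h0
  · exact h1
  · exact h2

lemma lineHasDerivAt (z d : ST2) (s : ℝ) : HasDerivAt (fun s : ℝ => z + s • d) d s := by
  simpa using ((hasDerivAt_id s).smul_const d).const_add z

lemma line_zero (z d : ST2) : z + (0:ℝ) • d = z := by simp

lemma pdC_eq_fderiv {f : ST2 → ℂ} (hf : Differentiable ℝ f) (β : Fin 3) (z : ST2) :
    pdC β f z = fderiv ℝ f z (dir3 β) := by
  rw [pdC_eq_line]
  have := ((hf (z + (0:ℝ) • dir3 β)).hasFDerivAt.comp_hasDerivAt 0 (lineHasDerivAt z (dir3 β) 0))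
  rw [line_zero] at this
  exact this.deriv

lemma pdC_congr {f g : ST2 → ℂ} (h : ∀ w, f w = g w) (β : Fin 3) (z : ST2) :
    pdC β f z = pdC β g z := by
  have : f = g := funext h
  rw [this]

def H1 (t : ℝ) : ℝ := (Real.sqrt |t|)⁻¹ * ((1+|t|)^2)⁻¹

lemma H1_nonneg (t : ℝ) : 0 ≤ H1 t := by
  unfold H1; positivity

lemma H1_meas : Measurable H1 :=
  ((Real.continuous_sqrt.comp (continuous_abs)).measurable.inv).mul
    (((continuous_const.add continuous_abs).pow 2).measurable.inv)

lemma neg_rpow_half (t : ℝ) (ht : t < 0) : t ^ (-(1/2) : ℝ) = 0 := by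
  rw [Real.rpow_def_of_neg ht, show (-(1/2):ℝ)*Real.pi = -(Real.pi/2) by ring,
    Real.cos_neg, Real.cos_pi_div_two, mul_zero]

lemma sqrt_abs_inv_eq (t : ℝ) : (Real.sqrt |t|)⁻¹ = |t| ^ (-(1/2) : ℝ) := by
  rw [Real.rpow_neg (abs_nonneg t), Real.sqrt_eq_rpow]

lemma H1_le_sqrt_inv (t : ℝ) : H1 t ≤ (Real.sqrt |t|)⁻¹ := by
  have h1 : ((1+|t|)^2)⁻¹ ≤ 1 := inv_le_one_of_one_le₀ (by nlinarith [abs_nonneg t])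
  simpa [H1] using mul_le_of_le_one_right (a := (Real.sqrt |t|)⁻¹) (by positivity) h1

lemma H1_integrable : Integrable H1 := by
  have meas := H1_meas.aestronglyMeasurable (μ := (volume : Measure ℝ))
  have hrpow : IntervalIntegrable (fun x : ℝ => x ^ (-(1/2) : ℝ)) volume (-1) 1 :=
    intervalIntegral.intervalIntegrable_rpow' (by norm_num)
  have hrpow2 : IntervalIntegrable (fun x : ℝ => (-x) ^ (-(1/2) : ℝ)) volume (-1) 1 := by
    have := ((IntervalIntegrable.iff_comp_neg (f := fun x : ℝ => x ^ (-(1/2) : ℝ))).mp hrpow).symm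
    simpa using this
  have hg : IntegrableOn (fun t : ℝ => t ^ (-(1/2) : ℝ) + (-t) ^ (-(1/2) : ℝ))
      (Set.Ioc (-1) 1) := (hrpow.add hrpow2).1
  have h1 : IntegrableOn H1 (Set.Ioc (-1) 1) := by
    refine hg.mono' meas.restrict ?_
    refine Filter.Eventually.of_forall (fun t => ?_)
    rw [Real.norm_eq_abs, abs_of_nonneg (H1_nonneg t)]
    rcases lt_trichotomy t 0 with ht | ht | ht
    · rw [neg_rpow_half t ht, zero_add, show (-t) ^ (-(1/2):ℝ) = |t| ^ (-(1/2):ℝ) by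
        rw [abs_of_neg ht], ← sqrt_abs_inv_eq]
      exact H1_le_sqrt_inv t
    · subst ht; simp [H1]
    · rw [neg_rpow_half (-t) (by linarith), add_zero,
        show t ^ (-(1/2):ℝ) = |t| ^ (-(1/2):ℝ) by rw [abs_of_pos ht], ← sqrt_abs_inv_eq]
      exact H1_le_sqrt_inv t
  have h2' : Integrable (fun t : ℝ => (1 + ‖t‖) ^ (-(2:ℝ))) := by
    apply integrable_one_add_norm (E := ℝ); simp
  have h2 : IntegrableOn H1 (Set.Ioc (-1) 1)ᶜ := by
    refine (h2'.integrableOn).mono' meas.restrict ?_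
    refine (ae_restrict_iff' (measurableSet_Ioc.compl)).mpr
      (Filter.Eventually.of_forall (fun t ht => ?_))
    have habs : 1 ≤ |t| := by
      simp only [Set.mem_compl_iff, Set.mem_Ioc, not_and_or, not_lt, not_le] at ht
      rcases ht with h | h
      · rw [abs_of_nonpos (by linarith)]; linarith
      · rw [abs_of_pos (by linarith)]; linarith
    have hsq : 1 ≤ Real.sqrt |t| := by
      rw [show (1:ℝ) = Real.sqrt 1 by simp]
      exact Real.sqrt_le_sqrt habs
    rw [Real.norm_eq_abs, abs_of_nonneg (H1_nonneg t)]
    have e : (1 + |t|) ^ (-(2:ℝ)) = ((1+|t|)^2)⁻¹ := by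
      rw [Real.rpow_neg (by positivity), ← Real.rpow_natCast (1+|t|) 2]
      norm_num
    rw [Real.norm_eq_abs, e]
    calc H1 t ≤ 1 * ((1+|t|)^2)⁻¹ := by
          unfold H1
          apply mul_le_mul_of_nonneg_right _ (by positivity)
          exact inv_le_one_of_one_le₀ hsq
      _ = ((1+|t|)^2)⁻¹ := one_mul _
  have : IntegrableOn H1 (Set.Ioc (-1) 1 ∪ (Set.Ioc (-1) 1)ᶜ) := h1.union h2
  rwa [Set.union_compl_self, integrableOn_univ] at this

-- 2D product integrable
lemma H1_prod_integrable : Integrable (fun x : E2 => H1 (x 0) * H1 (x 1)) := by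
  have hpi : Integrable (fun y : Fin 2 → ℝ => ∏ i : Fin 2, H1 (y i)) :=
    Integrable.fintype_prod (𝕜 := ℝ) (f := fun _ => H1) (fun _ => H1_integrable)
  have hmp := EuclideanSpace.volume_preserving_symm_measurableEquiv_toLp (Fin 2)
  have := ((hmp.integrable_comp_emb (MeasurableEquiv.toLp 2 (Fin 2 → ℝ)).symm.measurableEmbedding)).mpr hpi
  have he : ((fun y : Fin 2 → ℝ => ∏ i : Fin 2, H1 (y i)) ∘ (MeasurableEquiv.toLp 2 (Fin 2 → ℝ)).symm)
      = fun x : E2 => H1 (x 0) * H1 (x 1) := by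
    funext x
    simp [Fin.prod_univ_two]
  rwa [he] at this

-- coordinate ≤ norm
lemma coord_abs_le_norm (x : E2) (j : Fin 2) : |x j| ≤ ‖x‖ := by
  rw [EuclideanSpace.norm_eq]
  rw [show |x j| = Real.sqrt (‖x j‖^2) by rw [Real.sqrt_sq_eq_abs, Real.norm_eq_abs, abs_abs]]
  apply Real.sqrt_le_sqrt
  exact Finset.single_le_sum (f := fun i => ‖x i‖^2) (fun i _ => by positivity) (Finset.mem_univ j)

-- lines are null
lemma coord_zero_null (j : Fin 2) : volume {x : E2 | x j = 0} = 0 := by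
  have : {x : E2 | x j = 0} = (LinearMap.ker ((EuclideanSpace.proj j : E2 →L[ℝ] ℝ) : E2 →ₗ[ℝ] ℝ) : Set E2) := by
    ext x
    simp [LinearMap.mem_ker]
  rw [this]
  apply Measure.addHaar_submodule
  intro h
  have : EuclideanSpace.single j (1:ℝ) ∈ LinearMap.ker ((EuclideanSpace.proj j : E2 →L[ℝ] ℝ) : E2 →ₗ[ℝ] ℝ) := by
    rw [h]; trivial
  simp [LinearMap.mem_ker] at this

lemma domInt : Integrable (fun x : E2 => ‖x‖⁻¹ * ((1+‖x‖)^4)⁻¹) := by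
  have meas : AEStronglyMeasurable (fun x : E2 => ‖x‖⁻¹ * ((1+‖x‖)^4)⁻¹) volume := by
    apply Measurable.aestronglyMeasurable
    exact (measurable_norm.inv).mul (((measurable_const.add measurable_norm).pow_const 4).inv)
  refine H1_prod_integrable.mono' meas ?_
  have hnull : volume ({x : E2 | x 0 = 0} ∪ {x : E2 | x 1 = 0}) = 0 :=
    measure_union_null (coord_zero_null 0) (coord_zero_null 1)
  have hae : ∀ᵐ x : E2, x ∉ ({x : E2 | x 0 = 0} ∪ {x : E2 | x 1 = 0}) :=
    (measure_eq_zero_iff_ae_notMem).mp hnull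
  refine hae.mono (fun x hx => ?_)
  simp only [Set.mem_union, Set.mem_setOf_eq, not_or] at hx
  obtain ⟨h0, h1⟩ := hx
  have h0' : 0 < |x 0| := abs_pos.mpr h0
  have h1' : 0 < |x 1| := abs_pos.mpr h1
  have hxpos : 0 < ‖x‖ := by
    have := coord_abs_le_norm x 0; linarith
  rw [Real.norm_eq_abs, abs_of_nonneg (by positivity)]
  have key1 : ‖x‖⁻¹ ≤ (Real.sqrt |x 0|)⁻¹ * (Real.sqrt |x 1|)⁻¹ := by
    rw [← mul_inv]
    apply inv_anti₀ (by positivity)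
    rw [← Real.sqrt_mul_self (le_of_lt hxpos), ← Real.sqrt_mul (abs_nonneg _)]
    apply Real.sqrt_le_sqrt
    have e0 := coord_abs_le_norm x 0
    have e1 := coord_abs_le_norm x 1
    nlinarith
  have key2 : ((1+‖x‖)^4)⁻¹ ≤ ((1+|x 0|)^2)⁻¹ * ((1+|x 1|)^2)⁻¹ := by
    rw [← mul_inv]
    apply inv_anti₀ (by positivity)
    have e0 := coord_abs_le_norm x 0
    have e1 := coord_abs_le_norm x 1
    have a0 : (1+|x 0|)^2 ≤ (1+‖x‖)^2 := by nlinarith [abs_nonneg (x 0), norm_nonneg x]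
    have a1 : (1+|x 1|)^2 ≤ (1+‖x‖)^2 := by nlinarith [abs_nonneg (x 1), norm_nonneg x]
    have := mul_le_mul a0 a1 (by positivity) (by positivity)
    nlinarith [this]
  calc ‖x‖⁻¹ * ((1+‖x‖)^4)⁻¹
      ≤ ((Real.sqrt |x 0|)⁻¹ * (Real.sqrt |x 1|)⁻¹) * (((1+|x 0|)^2)⁻¹ * ((1+|x 1|)^2)⁻¹) := by
        apply mul_le_mul key1 key2 (by positivity) (by positivity)
    _ = H1 (x 0) * H1 (x 1) := by unfold H1; ring

def gFun (a b : SchwartzMap ST2 ℂ) (w : ST2) : ℝ :=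
  (a w).re * (b w).im - (a w).im * (b w).re

lemma aux_le {x C B : ℝ} (hB : 0 < B) (h : B * x ≤ C) : x ≤ C * B⁻¹ := by
  rw [mul_comm]
  calc x = B⁻¹ * (B * x) := by field_simp
    _ ≤ B⁻¹ * C := by gcongr

lemma schwartz_decay4 (a : SchwartzMap ST2 ℂ) :
    ∃ C : ℝ, 0 ≤ C ∧ ∀ w : ST2, ‖a w‖ ≤ C * ((1+‖w‖)^4)⁻¹
      ∧ ‖fderiv ℝ a w‖ ≤ C * ((1+‖w‖)^4)⁻¹ := by
  set M := (2:ℝ) ^ 4 * ((Finset.Iic ((4:ℕ),(1:ℕ))).sup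
    (fun m => SchwartzMap.seminorm ℝ m.1 m.2)) a with hM
  have hM0 : 0 ≤ M := mul_nonneg (by norm_num) (apply_nonneg _ _)
  refine ⟨M, hM0, fun w => ⟨?_, ?_⟩⟩
  · have h := SchwartzMap.one_add_le_sup_seminorm_apply (𝕜 := ℝ) (m := ((4:ℕ),(1:ℕ)))
      (k := 4) (n := 0) le_rfl (by norm_num) a w
    rw [norm_iteratedFDeriv_zero] at h
    exact aux_le (by positivity) h
  · have h := SchwartzMap.one_add_le_sup_seminorm_apply (𝕜 := ℝ) (m := ((4:ℕ),(1:ℕ)))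
      (k := 4) (n := 1) le_rfl le_rfl a w
    have e : ‖iteratedFDeriv ℝ 1 (⇑a) w‖ = ‖fderiv ℝ (⇑a) w‖ := by
      rw [← norm_iteratedFDeriv_fderiv (n := 0), norm_iteratedFDeriv_zero]
    rw [e] at h
    exact aux_le (by positivity) h

lemma schwartz_diff (a : SchwartzMap ST2 ℂ) : Differentiable ℝ (⇑a) :=
  (a.smooth ⊤).differentiable (by simp)

lemma gFun_contDiff (a b : SchwartzMap ST2 ℂ) : ContDiff ℝ ∞ (gFun a b) := by
  have ha := a.smooth ⊤
  have hb := b.smooth ⊤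
  exact ((Complex.reCLM.contDiff.comp ha).mul (Complex.imCLM.contDiff.comp hb)).sub
    ((Complex.imCLM.contDiff.comp ha).mul (Complex.reCLM.contDiff.comp hb))

lemma gFun_hasFDerivAt (a b : SchwartzMap ST2 ℂ) (w : ST2) :
    HasFDerivAt (gFun a b)
      (((a w).re • (Complex.imCLM.comp (fderiv ℝ b w)) +
        (b w).im • (Complex.reCLM.comp (fderiv ℝ a w))) -
       ((a w).im • (Complex.reCLM.comp (fderiv ℝ b w)) +
        (b w).re • (Complex.imCLM.comp (fderiv ℝ a w)))) w := by
  have hfa : HasFDerivAt (fun u => (a u).re) (Complex.reCLM.comp (fderiv ℝ a w)) w :=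
    (Complex.reCLM.hasFDerivAt).comp w (schwartz_diff a w).hasFDerivAt
  have hfa' : HasFDerivAt (fun u => (a u).im) (Complex.imCLM.comp (fderiv ℝ a w)) w :=
    (Complex.imCLM.hasFDerivAt).comp w (schwartz_diff a w).hasFDerivAt
  have hfb : HasFDerivAt (fun u => (b u).re) (Complex.reCLM.comp (fderiv ℝ b w)) w :=
    (Complex.reCLM.hasFDerivAt).comp w (schwartz_diff b w).hasFDerivAt
  have hfb' : HasFDerivAt (fun u => (b u).im) (Complex.imCLM.comp (fderiv ℝ b w)) w :=
    (Complex.imCLM.hasFDerivAt).comp w (schwartz_diff b w).hasFDerivAt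
  exact (hfa.mul hfb').sub (hfa'.mul hfb)

lemma comp_norm_le (L : ℂ →L[ℝ] ℝ) (hL : ‖L‖ ≤ 1) (T : ST2 →L[ℝ] ℂ) :
    ‖L.comp T‖ ≤ ‖T‖ := by
  calc ‖L.comp T‖ ≤ ‖L‖ * ‖T‖ := ContinuousLinearMap.opNorm_comp_le _ _
    _ ≤ 1 * ‖T‖ := by gcongr
    _ = ‖T‖ := one_mul _

lemma gFun_bound (a b : SchwartzMap ST2 ℂ) :
    ∃ C : ℝ, 0 ≤ C ∧ ∀ w : ST2, |gFun a b w| ≤ C * ((1+‖w.2‖)^4)⁻¹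
      ∧ ‖fderiv ℝ (gFun a b) w‖ ≤ C * ((1+‖w.2‖)^4)⁻¹ := by
  obtain ⟨Ca, hCa0, hCa⟩ := schwartz_decay4 a
  obtain ⟨Cb, hCb0, hCb⟩ := schwartz_decay4 b
  have hinv1 : ∀ w : ST2, ((1+‖w‖)^4)⁻¹ ≤ 1 := fun w =>
    inv_le_one_of_one_le₀ (one_le_pow₀ (by linarith [norm_nonneg w]))
  have hsnd : ∀ w : ST2, ((1+‖w‖)^4)⁻¹ ≤ ((1+‖w.2‖)^4)⁻¹ := by
    intro w
    apply inv_anti₀ (by positivity)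
    gcongr
    exact norm_snd_le w
  have hinvpos : ∀ w : ST2, (0:ℝ) ≤ ((1+‖w‖)^4)⁻¹ := fun w => by positivity
  have hav : ∀ w : ST2, ‖a w‖ ≤ Ca := fun w => by
    calc ‖a w‖ ≤ Ca * ((1+‖w‖)^4)⁻¹ := (hCa w).1
      _ ≤ Ca * 1 := by gcongr; exact hinv1 w
      _ = Ca := mul_one _
  have hbv : ∀ w : ST2, ‖b w‖ ≤ Cb := fun w => by
    calc ‖b w‖ ≤ Cb * ((1+‖w‖)^4)⁻¹ := (hCb w).1
      _ ≤ Cb * 1 := by gcongr; exact hinv1 w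
      _ = Cb := mul_one _
  refine ⟨4 * (Ca+1) * (Cb+1), by positivity, fun w => ⟨?_, ?_⟩⟩
  · have ra : |(a w).re| ≤ ‖a w‖ := by
      exact Complex.abs_re_le_norm _
    have ia : |(a w).im| ≤ ‖a w‖ := by
      exact Complex.abs_im_le_norm _
    have rb : |(b w).re| ≤ ‖b w‖ := by
      exact Complex.abs_re_le_norm _
    have ib : |(b w).im| ≤ ‖b w‖ := by
      exact Complex.abs_im_le_norm _
    calc |gFun a b w| ≤ |(a w).re * (b w).im| + |(a w).im * (b w).re| := abs_sub _ _
      _ ≤ ‖a w‖ * ‖b w‖ + ‖a w‖ * ‖b w‖ := by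
          rw [abs_mul, abs_mul]
          exact add_le_add (mul_le_mul ra ib (abs_nonneg _) (norm_nonneg _))
            (mul_le_mul ia rb (abs_nonneg _) (norm_nonneg _))
      _ = 2 * (‖a w‖ * ‖b w‖) := by ring
      _ ≤ 2 * ((Ca * ((1+‖w‖)^4)⁻¹) * Cb) := by
          apply mul_le_mul_of_nonneg_left _ (by norm_num : (0:ℝ) ≤ 2)
          exact mul_le_mul (hCa w).1 (hbv w) (norm_nonneg _) (by positivity)
      _ ≤ 4 * (Ca+1) * (Cb+1) * ((1+‖w‖)^4)⁻¹ := by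
          nlinarith [hinvpos w, mul_nonneg hCa0 hCb0, mul_nonneg (mul_nonneg hCa0 hCb0) (hinvpos w),
            mul_nonneg hCa0 (hinvpos w), mul_nonneg hCb0 (hinvpos w)]
      _ ≤ 4 * (Ca+1) * (Cb+1) * ((1+‖w.2‖)^4)⁻¹ := by
          have h4 : (0:ℝ) ≤ 4 * (Ca+1) * (Cb+1) := by positivity
          exact mul_le_mul_of_nonneg_left (hsnd w) h4
  · have hD := (gFun_hasFDerivAt a b w).fderiv
    rw [hD]
    have nr : ∀ z : ℂ, ‖z.re‖ ≤ ‖z‖ := fun z => by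
      rw [Real.norm_eq_abs]; exact Complex.abs_re_le_norm _
    have ni : ∀ z : ℂ, ‖z.im‖ ≤ ‖z‖ := fun z => by
      rw [Real.norm_eq_abs]; exact Complex.abs_im_le_norm _
    have e1 : ‖(a w).re • (Complex.imCLM.comp (fderiv ℝ b w))‖ ≤ ‖a w‖ * ‖fderiv ℝ b w‖ :=
      (norm_smul_le _ _).trans (mul_le_mul (nr _)
        (comp_norm_le _ (le_of_eq Complex.imCLM_norm) _) (norm_nonneg _) (norm_nonneg _))
    have e2 : ‖(b w).im • (Complex.reCLM.comp (fderiv ℝ a w))‖ ≤ ‖b w‖ * ‖fderiv ℝ a w‖ :=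
      (norm_smul_le _ _).trans (mul_le_mul (ni _)
        (comp_norm_le _ (le_of_eq Complex.reCLM_norm) _) (norm_nonneg _) (norm_nonneg _))
    have e3 : ‖(a w).im • (Complex.reCLM.comp (fderiv ℝ b w))‖ ≤ ‖a w‖ * ‖fderiv ℝ b w‖ :=
      (norm_smul_le _ _).trans (mul_le_mul (ni _)
        (comp_norm_le _ (le_of_eq Complex.reCLM_norm) _) (norm_nonneg _) (norm_nonneg _))
    have e4 : ‖(b w).re • (Complex.imCLM.comp (fderiv ℝ a w))‖ ≤ ‖b w‖ * ‖fderiv ℝ a w‖ :=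
      (norm_smul_le _ _).trans (mul_le_mul (nr _)
        (comp_norm_le _ (le_of_eq Complex.imCLM_norm) _) (norm_nonneg _) (norm_nonneg _))
    calc ‖_ - _‖ ≤ ‖(a w).re • (Complex.imCLM.comp (fderiv ℝ b w)) +
          (b w).im • (Complex.reCLM.comp (fderiv ℝ a w))‖ +
          ‖(a w).im • (Complex.reCLM.comp (fderiv ℝ b w)) +
          (b w).re • (Complex.imCLM.comp (fderiv ℝ a w))‖ := norm_sub_le _ _
      _ ≤ (‖a w‖ * ‖fderiv ℝ b w‖ + ‖b w‖ * ‖fderiv ℝ a w‖) +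
          (‖a w‖ * ‖fderiv ℝ b w‖ + ‖b w‖ * ‖fderiv ℝ a w‖) := by
          exact add_le_add ((norm_add_le _ _).trans (add_le_add e1 e2))
            ((norm_add_le _ _).trans (add_le_add e3 e4))
      _ = 2 * (‖a w‖ * ‖fderiv ℝ b w‖) + 2 * (‖b w‖ * ‖fderiv ℝ a w‖) := by ring
      _ ≤ 2 * (Ca * (Cb * ((1+‖w‖)^4)⁻¹)) + 2 * (Cb * (Ca * ((1+‖w‖)^4)⁻¹)) := by
          apply add_le_add
          · apply mul_le_mul_of_nonneg_left _ (by norm_num : (0:ℝ) ≤ 2)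
            exact mul_le_mul (hav w) (hCb w).2 (norm_nonneg _) hCa0
          · apply mul_le_mul_of_nonneg_left _ (by norm_num : (0:ℝ) ≤ 2)
            exact mul_le_mul (hbv w) (hCa w).2 (norm_nonneg _) hCb0
      _ ≤ 4 * (Ca+1) * (Cb+1) * ((1+‖w‖)^4)⁻¹ := by
          nlinarith [hinvpos w, mul_nonneg (mul_nonneg hCa0 hCb0) (hinvpos w),
            mul_nonneg hCa0 (hinvpos w), mul_nonneg hCb0 (hinvpos w)]
      _ ≤ 4 * (Ca+1) * (Cb+1) * ((1+‖w.2‖)^4)⁻¹ := by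
          have h4 : (0:ℝ) ≤ 4 * (Ca+1) * (Cb+1) := by positivity
          exact mul_le_mul_of_nonneg_left (hsnd w) h4

lemma kernel_meas (j : Fin 2) : Measurable (fun x : E2 => x j / ‖x‖^2) := by
  have h1 : Measurable (fun x : E2 => x j) :=
    (EuclideanSpace.proj (𝕜 := ℝ) j).continuous.measurable
  exact h1.div ((continuous_norm.pow 2).measurable)

lemma kernel_abs_le (j : Fin 2) (x : E2) : |x j / ‖x‖^2| ≤ ‖x‖⁻¹ := by
  rcases eq_or_ne x 0 with rfl | hx
  · simp
  · have hn : 0 < ‖x‖ := norm_pos_iff.mpr hx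
    rw [abs_div, abs_of_nonneg (by positivity : (0:ℝ) ≤ ‖x‖^2)]
    rw [div_le_iff₀ (by positivity)]
    calc |x j| ≤ ‖x‖ := coord_abs_le_norm x j
      _ = ‖x‖⁻¹ * ‖x‖^2 := by field_simp
    
lemma decay_shift {R : ℝ} (hR : 0 ≤ R) {w : E2} (hw : ‖w‖ ≤ R) (x : E2) :
    ((1 + ‖w - x‖)^4)⁻¹ ≤ (1+R)^4 * ((1+‖x‖)^4)⁻¹ := by
  have h1 : 1 + ‖x‖ ≤ (1+R) * (1 + ‖w - x‖) := by
    have : ‖x‖ ≤ ‖w - x‖ + ‖w‖ := by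
      calc ‖x‖ = ‖w - (w - x)‖ := by rw [sub_sub_cancel]
        _ ≤ ‖w‖ + ‖w - x‖ := norm_sub_le _ _
        _ = ‖w - x‖ + ‖w‖ := by ring
    nlinarith [norm_nonneg (w - x), norm_nonneg w]
  have h2 : (1 + ‖x‖)^4 ≤ (1+R)^4 * (1 + ‖w - x‖)^4 := by
    calc (1 + ‖x‖)^4 ≤ ((1+R) * (1 + ‖w - x‖))^4 := by
          apply pow_le_pow_left₀ (by positivity) h1
      _ = (1+R)^4 * (1 + ‖w - x‖)^4 := by ring
  have hA : (0:ℝ) < (1+‖x‖)^4 := by positivity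
  have hB : (0:ℝ) < (1+‖w-x‖)^4 := by positivity
  rw [show ((1+‖w-x‖)^4)⁻¹ = 1/((1+‖w-x‖)^4) by rw [one_div],
    ← div_eq_mul_inv, div_le_div_iff₀ hB hA]
  nlinarith [h2]

/-- Master lemma: differentiability in `s` of the singular-kernel integral along a line. -/
lemma line_int_hasDeriv (g : ST2 → ℝ) (hg : ContDiff ℝ ∞ g) (C : ℝ)
    (hgb : ∀ w, |g w| ≤ C * ((1+‖w.2‖)^4)⁻¹)
    (hgd : ∀ w, ‖fderiv ℝ g w‖ ≤ C * ((1+‖w.2‖)^4)⁻¹)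
    (j : Fin 2) (d : ST2) (hd : ‖d‖ ≤ 1) (z : ST2) (s₀ : ℝ) :
    DifferentiableAt ℝ
      (fun s : ℝ => ∫ x : E2, (x j / ‖x‖^2) * g (z.1 + s * d.1, z.2 + s • d.2 - x)) s₀ := by
  have hC : 0 ≤ C := by
    have := (hgb 0).trans' (abs_nonneg _)
    nlinarith [this, inv_pos.mpr (pow_pos (show (0:ℝ) < 1 + ‖(0:ST2).2‖ by simp) 4)]
  set R : ℝ := ‖z.2‖ + (|s₀| + 1) with hRdef
  have hR0 : 0 ≤ R := by positivity
  have hdn : ‖d.2‖ ≤ 1 := le_trans (norm_snd_le d) hd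
  have hd1 : |d.1| ≤ 1 := by
    have := le_trans (norm_fst_le d) hd
    simpa [Real.norm_eq_abs] using this
  -- uniform bound on base points
  have hwR : ∀ s ∈ ball s₀ (1:ℝ), ‖z.2 + s • d.2‖ ≤ R := by
    intro s hs
    have hs' : |s - s₀| < 1 := by simpa [Real.dist_eq] using hs
    have : |s| ≤ |s₀| + 1 := by
      have := abs_sub_abs_le_abs_sub s s₀
      linarith
    calc ‖z.2 + s • d.2‖ ≤ ‖z.2‖ + ‖s • d.2‖ := norm_add_le _ _
      _ ≤ ‖z.2‖ + (|s₀|+1) := by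
          rw [norm_smul, Real.norm_eq_abs]
          have : |s| * ‖d.2‖ ≤ (|s₀|+1) * 1 :=
            mul_le_mul this hdn (norm_nonneg _) (by positivity)
          linarith [this]
      _ = R := rfl
  -- dominating function
  set bound : E2 → ℝ := fun x => ‖x‖⁻¹ * (C * (1+R)^4 * ((1+‖x‖)^4)⁻¹) with hbd
  have bound_int : Integrable bound := by
    have he : bound = fun x : E2 => (C * (1+R)^4) * (‖x‖⁻¹ * ((1+‖x‖)^4)⁻¹) := by
      funext x; simp only [hbd]; ring
    rw [he]
    exact domInt.const_mul _
  have bound_nonneg : ∀ x, 0 ≤ bound x := fun x => by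
    simp only [hbd]; positivity
  -- the parametrized integrand and its derivative
  set F : ℝ → E2 → ℝ := fun s x => (x j / ‖x‖^2) * g (z.1 + s * d.1, z.2 + s • d.2 - x) with hF
  set F' : ℝ → E2 → ℝ :=
    fun s x => (x j / ‖x‖^2) * (fderiv ℝ g (z.1 + s * d.1, z.2 + s • d.2 - x) d) with hF'
  have hgdiff : Differentiable ℝ g := hg.differentiable (by simp)
  have hgcont : Continuous g := hgdiff.continuous
  have hptcont : ∀ s : ℝ, Continuous (fun x : E2 => (z.1 + s * d.1, z.2 + s • d.2 - x) : E2 → ST2) :=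
    fun s => continuous_const.prodMk (continuous_const.sub continuous_id)
  have hFmeas : ∀ s : ℝ, AEStronglyMeasurable (F s) volume := by
    intro s
    exact ((kernel_meas j).mul ((hgcont.comp (hptcont s)).measurable)).aestronglyMeasurable
  have hF'meas : AEStronglyMeasurable (F' s₀) volume := by
    have hcd : Continuous (fun x : E2 => fderiv ℝ g (z.1 + s₀ * d.1, z.2 + s₀ • d.2 - x) d) := by
      have h1 : Continuous (fderiv ℝ g) := hg.continuous_fderiv (by simp)
      exact (h1.comp (hptcont s₀)).clm_apply continuous_const
    exact ((kernel_meas j).mul hcd.measurable).aestronglyMeasurable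
  have hmemball : s₀ ∈ ball s₀ (1:ℝ) := mem_ball_self one_pos
  have hFint : Integrable (F s₀) volume := by
    refine bound_int.mono' (hFmeas s₀) (Filter.Eventually.of_forall (fun x => ?_))
    have h1 : |g (z.1 + s₀ * d.1, z.2 + s₀ • d.2 - x)|
        ≤ C * ((1 + ‖z.2 + s₀ • d.2 - x‖)^4)⁻¹ := hgb _
    have h2 : ((1 + ‖z.2 + s₀ • d.2 - x‖)^4)⁻¹ ≤ (1+R)^4 * ((1+‖x‖)^4)⁻¹ :=
      decay_shift hR0 (hwR s₀ hmemball) x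
    rw [Real.norm_eq_abs, hF, abs_mul]
    calc |x j / ‖x‖^2| * |g (z.1 + s₀ * d.1, z.2 + s₀ • d.2 - x)|
        ≤ ‖x‖⁻¹ * (C * ((1+R)^4 * ((1+‖x‖)^4)⁻¹)) := by
          apply mul_le_mul (kernel_abs_le j x) _ (abs_nonneg _) (by positivity)
          calc |g (z.1 + s₀ * d.1, z.2 + s₀ • d.2 - x)|
              ≤ C * ((1 + ‖z.2 + s₀ • d.2 - x‖)^4)⁻¹ := h1
            _ ≤ C * ((1+R)^4 * ((1+‖x‖)^4)⁻¹) := mul_le_mul_of_nonneg_left h2 hC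
      _ = bound x := by simp only [hbd]; ring
  have h_bound : ∀ᵐ x : E2, ∀ s ∈ ball s₀ (1:ℝ), ‖F' s x‖ ≤ bound x := by
    refine Filter.Eventually.of_forall (fun x s hs => ?_)
    have h2 : ((1 + ‖z.2 + s • d.2 - x‖)^4)⁻¹ ≤ (1+R)^4 * ((1+‖x‖)^4)⁻¹ :=
      decay_shift hR0 (hwR s hs) x
    have h3 : ‖fderiv ℝ g (z.1 + s * d.1, z.2 + s • d.2 - x) d‖
        ≤ C * ((1 + ‖z.2 + s • d.2 - x‖)^4)⁻¹ := by
      calc ‖fderiv ℝ g (z.1 + s * d.1, z.2 + s • d.2 - x) d‖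
          ≤ ‖fderiv ℝ g (z.1 + s * d.1, z.2 + s • d.2 - x)‖ * ‖d‖ :=
            ContinuousLinearMap.le_opNorm _ _
        _ ≤ (C * ((1 + ‖z.2 + s • d.2 - x‖)^4)⁻¹) * 1 := by
            apply mul_le_mul (hgd _) hd (norm_nonneg _) (by positivity)
        _ = C * ((1 + ‖z.2 + s • d.2 - x‖)^4)⁻¹ := mul_one _
    rw [Real.norm_eq_abs, hF', abs_mul]
    calc |x j / ‖x‖^2| * |fderiv ℝ g (z.1 + s * d.1, z.2 + s • d.2 - x) d|
        ≤ ‖x‖⁻¹ * (C * ((1+R)^4 * ((1+‖x‖)^4)⁻¹)) := by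
          apply mul_le_mul (kernel_abs_le j x) _ (abs_nonneg _) (by positivity)
          calc |fderiv ℝ g (z.1 + s * d.1, z.2 + s • d.2 - x) d|
              ≤ C * ((1 + ‖z.2 + s • d.2 - x‖)^4)⁻¹ := h3
            _ ≤ C * ((1+R)^4 * ((1+‖x‖)^4)⁻¹) := mul_le_mul_of_nonneg_left h2 hC
      _ = bound x := by simp only [hbd]; ring
  have h_diff : ∀ᵐ x : E2, ∀ s ∈ ball s₀ (1:ℝ), HasDerivAt (fun s => F s x) (F' s x) s := by
    refine Filter.Eventually.of_forall (fun x s _ => ?_)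
    have hm : HasDerivAt (fun s : ℝ => ((z.1 + s * d.1, z.2 + s • d.2 - x) : ST2)) d s := by
      have h1 : HasDerivAt (fun s : ℝ => z.1 + s * d.1) d.1 s := by
        simpa using ((hasDerivAt_id s).mul_const d.1).const_add z.1
      have h2 : HasDerivAt (fun s : ℝ => z.2 + s • d.2 - x) d.2 s := by
        have := (((hasDerivAt_id s).smul_const d.2).const_add z.2).sub_const x
        simpa using this
      exact h1.prodMk h2
    have hgd' := (hgdiff (z.1 + s * d.1, z.2 + s • d.2 - x)).hasFDerivAt
    have := (hgd'.comp_hasDerivAt s hm).const_mul (x j / ‖x‖^2)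
    simpa [hF, hF'] using this
  have := (hasDerivAt_integral_of_dominated_loc_of_deriv_le (ball_mem_nhds s₀ one_pos)
    (Filter.Eventually.of_forall hFmeas) hFint hF'meas h_bound bound_int h_diff).2
  exact this.differentiableAt

lemma int_shift (g : ST2 → ℝ) (t : ℝ) (w : E2) (j : Fin 2) :
    ∫ q : E2, ((w j - q j) / ‖w - q‖^2) * g (t, q)
      = ∫ x : E2, (x j / ‖x‖^2) * g (t, w - x) := by
  have h := integral_sub_left_eq_self
    (fun q : E2 => ((w j - q j) / ‖w - q‖^2) * g (t, q)) volume w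
  rw [← h]
  apply integral_congr_ae
  refine Filter.Eventually.of_forall (fun x => ?_)
  have e1 : w - (w - x) = x := sub_sub_cancel w x
  have e2 : (w - x) j = w j - x j := rfl
  simp only [e1, e2]
  ring_nf

lemma gaugeA_line_diff (ψ : Fin 3 → ST2 → ℂ) (S : Fin 3 → SchwartzMap ST2 ℂ)
    (hSψ : ∀ ν z, ψ ν z = S ν z) (ν : Fin 3) (d : ST2) (hd : ‖d‖ ≤ 1) (z : ST2) (s₀ : ℝ) :
    DifferentiableAt ℝ (fun s : ℝ => gaugeA ψ ν (z + s • d)) s₀ := by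
  have key : ∀ w : ST2, gaugeA ψ ν w = (1 / (2 * Real.pi)) *
      ∑ j : Fin 2, ∫ x : E2, (x j / ‖x‖^2) * gFun (S ν) (S j.succ) (w.1, w.2 - x) := by
    intro w
    unfold gaugeA
    congr 1
    apply Finset.sum_congr rfl
    intro j _
    rw [← int_shift]
    apply integral_congr_ae
    refine Filter.Eventually.of_forall (fun q => ?_)
    simp only [gFun, hSψ]
  have he : (fun s : ℝ => gaugeA ψ ν (z + s • d)) = fun s : ℝ => (1 / (2 * Real.pi)) *
      ((∫ x : E2, (x (0:Fin 2) / ‖x‖^2) * gFun (S ν) (S (0:Fin 2).succ) (z.1 + s * d.1, z.2 + s • d.2 - x))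
       + ∫ x : E2, (x (1:Fin 2) / ‖x‖^2) * gFun (S ν) (S (1:Fin 2).succ) (z.1 + s * d.1, z.2 + s • d.2 - x)) := by
    funext s
    rw [key, Fin.sum_univ_two]
    have e1 : (z + s • d).1 = z.1 + s * d.1 := rfl
    have e2 : (z + s • d).2 = z.2 + s • d.2 := rfl
    rw [e1, e2]
  rw [he]
  obtain ⟨C0, hC00, hC0⟩ := gFun_bound (S ν) (S (0:Fin 2).succ)
  obtain ⟨C1, hC10, hC1⟩ := gFun_bound (S ν) (S (1:Fin 2).succ)
  apply DifferentiableAt.const_mul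
  exact (line_int_hasDeriv _ (gFun_contDiff _ _) C0 (fun w => (hC0 w).1) (fun w => (hC0 w).2)
      0 d hd z s₀).add
    (line_int_hasDeriv _ (gFun_contDiff _ _) C1 (fun w => (hC1 w).1) (fun w => (hC1 w).2)
      1 d hd z s₀)

lemma pdC_fderiv_apply_smooth {f : ST2 → ℂ} (hf : ContDiff ℝ ∞ f) (α : Fin 3) :
    ContDiff ℝ ∞ (fun w => fderiv ℝ f w (dir3 α)) := by
  exact (hf.fderiv_right (by exact_mod_cast le_top)).clm_apply contDiff_const

lemma pdC_comm {f : ST2 → ℂ} (hf : ContDiff ℝ ∞ f) (α β : Fin 3) (z : ST2) :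
    pdC β (pdC α f) z = pdC α (pdC β f) z := by
  have hdf : Differentiable ℝ f := hf.differentiable (by simp)
  have hd2 : Differentiable ℝ (fderiv ℝ f) :=
    (hf.fderiv_right (m := ∞) (by exact_mod_cast le_top)).differentiable
      (by simp)
  have key : ∀ (γ δ : Fin 3), pdC δ (pdC γ f) z = fderiv ℝ (fderiv ℝ f) z (dir3 δ) (dir3 γ) := by
    intro γ δ
    have h1 : pdC δ (pdC γ f) z = pdC δ (fun w => fderiv ℝ f w (dir3 γ)) z :=
      pdC_congr (fun w => pdC_eq_fderiv hdf γ w) δ z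
    rw [h1, pdC_eq_fderiv
      (((pdC_fderiv_apply_smooth hf γ)).differentiable (by simp)) δ z]
    rw [fderiv_clm_apply (hd2 z) (differentiableAt_const _)]
    simp
  rw [key α β, key β α]
  have hsymm := second_derivative_symmetric (f := f) (f' := fderiv ℝ f)
    (f'' := fderiv ℝ (fderiv ℝ f) z) (x := z)
    (fun y => (hdf y).hasFDerivAt) ((hd2 z).hasFDerivAt)
  exact hsymm (dir3 β) (dir3 α)

lemma lineDiff_of_diff {f : ST2 → ℂ} (hf : Differentiable ℝ f) (β : Fin 3) (z : ST2) :
    DifferentiableAt ℝ (fun s : ℝ => f (z + s • dir3 β)) 0 :=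
  (hf _).comp 0 (lineHasDerivAt z (dir3 β) 0).differentiableAt

lemma pdC_const_mul (c : ℂ) (f : ST2 → ℂ) (β : Fin 3) (z : ST2) :
    pdC β (fun w => c * f w) z = c * pdC β f z := by
  rw [pdC_eq_line, pdC_eq_line]
  exact deriv_const_mul_field c

lemma pdC_split3 {f g h : ST2 → ℂ} {β : Fin 3} {z : ST2}
    (hf : DifferentiableAt ℝ (fun s : ℝ => f (z + s • dir3 β)) 0)
    (hg : DifferentiableAt ℝ (fun s : ℝ => g (z + s • dir3 β)) 0)
    (hh : DifferentiableAt ℝ (fun s : ℝ => h (z + s • dir3 β)) 0) :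
    pdC β (fun w => f w - (Complex.I * g w - Complex.I * h w)) z
      = pdC β f z - (Complex.I * pdC β g z - Complex.I * pdC β h z) := by
  simp only [pdC_eq_line]
  have e : (fun s : ℝ => (fun w => f w - (Complex.I * g w - Complex.I * h w)) (z + s • dir3 β))
      = fun s : ℝ => f (z + s • dir3 β) -
          (Complex.I * g (z + s • dir3 β) - Complex.I * h (z + s • dir3 β)) := rfl
  rw [e, deriv_fun_sub hf ((hg.const_mul Complex.I).fun_sub (hh.const_mul Complex.I)),
    deriv_fun_sub (hg.const_mul Complex.I) (hh.const_mul Complex.I),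
    deriv_const_mul_field Complex.I, deriv_const_mul_field Complex.I]

lemma pdC_comb3 {f g h : ST2 → ℂ} {α : Fin 3} {z : ST2}
    (hf : DifferentiableAt ℝ (fun s : ℝ => f (z + s • dir3 α)) 0)
    (hg : DifferentiableAt ℝ (fun s : ℝ => g (z + s • dir3 α)) 0)
    (hh : DifferentiableAt ℝ (fun s : ℝ => h (z + s • dir3 α)) 0) :
    pdC α (fun w => -(f w) + g w + h w) z = -(pdC α f z) + pdC α g z + pdC α h z := by
  simp only [pdC_eq_line]
  have e : (fun s : ℝ => (fun w => -(f w) + g w + h w) (z + s • dir3 α))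
      = fun s : ℝ => -(f (z + s • dir3 α)) + g (z + s • dir3 α) + h (z + s • dir3 α) := rfl
  rw [e, deriv_fun_add (hf.fun_neg.fun_add hg) hh, deriv_fun_add hf.fun_neg hg, deriv.fun_neg]


/-- **Derivation of the system of wave equations from the div–curl system**
(equation (3.3) of Krieger): Schwartz solutions of the div–curl system satisfy
`□ψ_α = i[-∂_t(ψ_α A₀)+∂₁(ψ_α A₁)+∂₂(ψ_α A₂)] - i[-∂_t(ψ₀A_α)+∂₁(ψ₁A_α)+∂₂(ψ₂A_α)]
+ i ∂_α(-ψ₀A₀+ψ₁A₁+ψ₂A₂)`. -/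
theorem wave_equation_from_div_curl
    (ψ : Fin 3 → ST2 → ℂ)
    (hS : ∀ ν, ∃ S : SchwartzMap ST2 ℂ, ∀ z, ψ ν z = S z)
    (h1 : DivCurlI ψ) (h2 : DivCurlII ψ) :
    ∀ (α : Fin 3) (z : ST2),
      boxC (ψ α) z =
        Complex.I * (-(pdC 0 (fun w => ψ α w * (gaugeA ψ 0 w : ℂ)) z) +
            pdC 1 (fun w => ψ α w * (gaugeA ψ 1 w : ℂ)) z +
            pdC 2 (fun w => ψ α w * (gaugeA ψ 2 w : ℂ)) z) -
        Complex.I * (-(pdC 0 (fun w => ψ 0 w * (gaugeA ψ α w : ℂ)) z) +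
            pdC 1 (fun w => ψ 1 w * (gaugeA ψ α w : ℂ)) z +
            pdC 2 (fun w => ψ 2 w * (gaugeA ψ α w : ℂ)) z) +
        Complex.I * pdC α (fun w => -(ψ 0 w * (gaugeA ψ 0 w : ℂ)) +
            ψ 1 w * (gaugeA ψ 1 w : ℂ) + ψ 2 w * (gaugeA ψ 2 w : ℂ)) z := by
  intro α z
  choose S hSmap using hS
  have hfun : ∀ ν, ψ ν = ⇑(S ν) := fun ν => funext (hSmap ν)
  have hsm : ∀ ν, ContDiff ℝ ∞ (ψ ν) := fun ν => by rw [hfun ν]; exact (S ν).smooth ⊤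
  have hdiff : ∀ ν, Differentiable ℝ (ψ ν) :=
    fun ν => (hsm ν).differentiable (by simp)
  -- line differentiability of ψ and of (A ν : ℂ) along coordinate lines
  have hψline : ∀ (ν β : Fin 3) (z : ST2),
      DifferentiableAt ℝ (fun s : ℝ => ψ ν (z + s • dir3 β)) 0 :=
    fun ν β z => lineDiff_of_diff (hdiff ν) β z
  have hAline : ∀ (ν β : Fin 3) (z : ST2),
      DifferentiableAt ℝ (fun s : ℝ => ((gaugeA ψ ν (z + s • dir3 β) : ℝ) : ℂ)) 0 := by
    intro ν β z
    have hre := gaugeA_line_diff ψ S hSmap ν (dir3 β) (norm_dir3 β) z 0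
    exact Complex.ofRealCLM.differentiableAt.comp 0 hre
  -- line differentiability of products ψ μ * (A ν : ℂ)
  have hPline : ∀ (μ ν β : Fin 3) (z : ST2),
      DifferentiableAt ℝ
        (fun s : ℝ => (fun w => ψ μ w * (gaugeA ψ ν w : ℂ)) (z + s • dir3 β)) 0 :=
    fun μ ν β z => (hψline μ β z).mul (hAline ν β z)
  -- line differentiability of first partials
  have hDline : ∀ (γ ν β : Fin 3) (z : ST2),
      DifferentiableAt ℝ (fun s : ℝ => pdC γ (ψ ν) (z + s • dir3 β)) 0 := by
    intro γ ν β z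
    have he : (fun s : ℝ => pdC γ (ψ ν) (z + s • dir3 β))
        = fun s : ℝ => (fun w => fderiv ℝ (ψ ν) w (dir3 γ)) (z + s • dir3 β) := by
      funext s
      rw [pdC_eq_fderiv (hdiff ν) γ _]
    rw [he]
    exact lineDiff_of_diff
      ((pdC_fderiv_apply_smooth (hsm ν) γ).differentiable (by simp)) β z
  -- the β-th second derivative split using equation (i)
  have hsplit : ∀ β : Fin 3, pdC β (pdC β (ψ α)) z
      = pdC β (pdC α (ψ β)) z
        - (Complex.I * pdC β (fun w => ψ β w * (gaugeA ψ α w : ℂ)) z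
           - Complex.I * pdC β (fun w => ψ α w * (gaugeA ψ β w : ℂ)) z) := by
    intro β
    have hcongr : ∀ w, pdC β (ψ α) w
        = (fun w => pdC α (ψ β) w - (Complex.I * (ψ β w * (gaugeA ψ α w : ℂ))
            - Complex.I * (ψ α w * (gaugeA ψ β w : ℂ)))) w := by
      intro w
      have h := h1 α β w
      simp only []
      linear_combination -h
    rw [pdC_congr hcongr β z]
    exact pdC_split3 (hDline α β β z) (hPline β α β z) (hPline α β β z)
  -- Clairaut
  have hcomm : ∀ β : Fin 3, pdC β (pdC α (ψ β)) z = pdC α (pdC β (ψ β)) z := by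
    intro β
    exact pdC_comm (hsm β) α β z
  -- the third term via equation (ii)
  have hthird : Complex.I * pdC α (fun w => -(ψ 0 w * (gaugeA ψ 0 w : ℂ)) +
      ψ 1 w * (gaugeA ψ 1 w : ℂ) + ψ 2 w * (gaugeA ψ 2 w : ℂ)) z
      = -(pdC α (pdC 0 (ψ 0)) z) + pdC α (pdC 1 (ψ 1)) z + pdC α (pdC 2 (ψ 2)) z := by
    have e1 : Complex.I * pdC α (fun w => -(ψ 0 w * (gaugeA ψ 0 w : ℂ)) +
        ψ 1 w * (gaugeA ψ 1 w : ℂ) + ψ 2 w * (gaugeA ψ 2 w : ℂ)) z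
        = pdC α (fun w => Complex.I * (-(ψ 0 w * (gaugeA ψ 0 w : ℂ)) +
            ψ 1 w * (gaugeA ψ 1 w : ℂ) + ψ 2 w * (gaugeA ψ 2 w : ℂ))) z :=
      (pdC_const_mul Complex.I _ α z).symm
    have e2 : pdC α (fun w => Complex.I * (-(ψ 0 w * (gaugeA ψ 0 w : ℂ)) +
        ψ 1 w * (gaugeA ψ 1 w : ℂ) + ψ 2 w * (gaugeA ψ 2 w : ℂ))) z
        = pdC α (fun w => -(pdC 0 (ψ 0) w) + pdC 1 (ψ 1) w + pdC 2 (ψ 2) w) z :=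
      pdC_congr (fun w => (h2 w).symm) α z
    have e3 : pdC α (fun w => -(pdC 0 (ψ 0) w) + pdC 1 (ψ 1) w + pdC 2 (ψ 2) w) z
        = -(pdC α (pdC 0 (ψ 0)) z) + pdC α (pdC 1 (ψ 1)) z + pdC α (pdC 2 (ψ 2)) z :=
      pdC_comb3 (hDline 0 0 α z) (hDline 1 1 α z) (hDline 2 2 α z)
    rw [e1, e2, e3]
  -- assemble
  rw [show boxC (ψ α) z = -(pdC 0 (pdC 0 (ψ α)) z) + pdC 1 (pdC 1 (ψ α)) z
      + pdC 2 (pdC 2 (ψ α)) z from rfl]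
  rw [hsplit 0, hsplit 1, hsplit 2, hcomm 0, hcomm 1, hcomm 2, hthird]
  ring
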